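/- Lemma, part 1: Let 𝒦 be a root class. If a group G has a finite subnormal series 1 = G₀ ◁ G₁ ◁ ⋯ ◁ Gₙ = G all of whose factors G_{i+1}/G_i belong to 𝒦, then G belongs to 𝒦. -/

import Mathlib

open Pointwise

universe u

/-- A class of groups in universe `u`. -/
abbrev GroupClass : Type (u + 1) := ∀ (G : Type u) [Group G], Prop

/-- A class of groups is invariant under isomorphism. -/
def GroupClass.IsoInvariant (K : GroupClass.{u}) : Prop :=
  ∀ (G H : Type u) [Group G] [Group H], G ≃* H → K G → K H

/-- A class of groups is closed under taking subgroups. -/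
def GroupClass.SubgroupClosed (K : GroupClass.{u}) : Prop :=
  ∀ (G : Type u) [Group G], K G → ∀ H : Subgroup G, K H

/-- A class of groups is closed under binary direct products. -/
def GroupClass.ProdClosed (K : GroupClass.{u}) : Prop :=
  ∀ (A B : Type u) [Group A] [Group B], K A → K B → K (A × B)

/-- `K` is a root class: it is an isomorphism-invariant class of groups containing a
nontrivial group, closed under subgroups and finite direct products, and satisfying the
root condition on subnormal chains `C ⊴ B ⊴ A` of length two. -/
def IsRootClass (K : GroupClass.{u}) : Prop :=
  K.IsoInvariant ∧
  (∃ (G : Type u) (_ : Group G), Nontrivial G ∧ K G) ∧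
  K.SubgroupClosed ∧
  K.ProdClosed ∧
  (∀ (A : Type u) [Group A] (B : Subgroup A) [B.Normal] (C : Subgroup B) [C.Normal],
    K (A ⧸ B) → K ((B : Type u) ⧸ C) →
    ∃ (D : Subgroup A) (hD : D.Normal), D ≤ C.map B.subtype ∧ (letI := hD; K (A ⧸ D)))

/-- A group `G` is `K`-residual: every nonidentity element is excluded from some normal
subgroup with quotient in `K`. -/
def KResidual (K : GroupClass.{u}) (G : Type u) [Group G] : Prop :=
  ∀ g : G, g ≠ 1 → ∃ (N : Subgroup G) (hN : N.Normal),
    (letI := hN; K (G ⧸ N)) ∧ g ∉ N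

/-- A subgroup `H` of `A` is `K`-closed: every element of `A` outside `H` avoids the set
`N * H` for some normal subgroup `N` of `A` with `A ⧸ N ∈ K`. -/
def KClosed (K : GroupClass.{u}) {A : Type u} [Group A] (H : Subgroup A) : Prop :=
  ∀ a : A, a ∉ H → ∃ (N : Subgroup A) (hN : N.Normal),
    (letI := hN; K (A ⧸ N)) ∧ a ∉ (N : Set A) * (H : Set A)

lemma K_of_subsingleton (K : GroupClass.{u}) (hK : IsRootClass K)
    (T : Type u) [Group T] [Subsingleton T] : K T := by
  obtain ⟨hiso, ⟨G0, _, hnt, hG0⟩, hsub, -, -⟩ := hK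
  have hb : K (⊥ : Subgroup G0) := hsub G0 hG0 ⊥
  haveI : Unique T := ⟨⟨1⟩, fun a => Subsingleton.elim _ _⟩
  exact hiso _ _ (MulEquiv.ofUnique (M := (⊥ : Subgroup G0)) (N := T)) hb

lemma K_of_normal (K : GroupClass.{u}) (hK : IsRootClass K)
    (A : Type u) [Group A] (B : Subgroup A) [B.Normal]
    (hB : K B) (hQ : K (A ⧸ B)) : K A := by
  obtain ⟨hiso, -, -, -, hroot⟩ := hK
  have hC : K ((B : Type u) ⧸ (⊥ : Subgroup B)) :=
    hiso _ _ (QuotientGroup.quotientBot (G := (B : Type u))).symm hB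
  obtain ⟨D, hDnorm, hDle, hKD⟩ := hroot A B ⊥ hQ hC
  have hD : D = ⊥ := le_bot_iff.mp (by simpa using hDle)
  subst hD
  exact hiso _ _ (QuotientGroup.quotientBot (G := A)) hKD

lemma K_top (K : GroupClass.{u}) (hK : IsRootClass K) :
    ∀ (n : ℕ) (G : Type u) [Group G] (s : Fin (n + 1) → Subgroup G),
    s 0 = ⊥ →
    (∀ i : Fin n, s i.castSucc ≤ s i.succ) →
    ∀ (hnorm : ∀ i : Fin n, ((s i.castSucc).subgroupOf (s i.succ)).Normal),
    (∀ i : Fin n,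
      letI := hnorm i
      K ((s i.succ : Type u) ⧸ (s i.castSucc).subgroupOf (s i.succ))) →
    K (s (Fin.last n)) := by
  intro n
  induction n with
  | zero =>
    intro G _ s hbot _ _ _
    rw [show (Fin.last 0) = 0 from rfl, hbot]
    exact K_of_subsingleton K hK _
  | succ n ih =>
    intro G _ s hbot hle hnorm hfac
    -- truncated series
    set s' : Fin (n + 1) → Subgroup G := fun i => s i.castSucc with hs'
    have hle' : ∀ i : Fin n, s' i.castSucc ≤ s' i.succ := by
      intro i
      have := hle i.castSucc
      rwa [Fin.succ_castSucc] at this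
    have hnorm' : ∀ i : Fin n, ((s' i.castSucc).subgroupOf (s' i.succ)).Normal := by
      intro i
      have := hnorm i.castSucc
      rwa [Fin.succ_castSucc] at this
    have hfac' : ∀ i : Fin n,
        letI := hnorm' i
        K ((s' i.succ : Type u) ⧸ (s' i.castSucc).subgroupOf (s' i.succ)) := by
      intro i
      have := hfac i.castSucc
      simp only [Fin.succ_castSucc] at this
      exact this
    have hB : K (s' (Fin.last n)) := ih G s' (by simp [hs', hbot]) hle' hnorm' hfac'
    -- top step
    have hiso := hK.1
    set i := Fin.last n
    have hlast : i.succ = Fin.last (n + 1) := rfl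
    letI := hnorm i
    have hQ : K ((s i.succ : Type u) ⧸ (s i.castSucc).subgroupOf (s i.succ)) := hfac i
    have hBsub : K ((s i.castSucc).subgroupOf (s i.succ)) :=
      hiso _ _ (Subgroup.subgroupOfEquivOfLe (hle i)).symm hB
    have : K (s i.succ) := K_of_normal K hK _ _ hBsub hQ
    rwa [hlast] at this

/-- Lemma, part 1: if a group `G` has a finite subnormal series
`⊥ = s 0 ⊴ s 1 ⊴ ⋯ ⊴ s n = ⊤` whose factors all belong to a root class `K`,
then `G` belongs to `K`. -/
theorem rootClass_of_subnormal_series (K : GroupClass.{u}) (hK : IsRootClass K)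
    (G : Type u) [Group G] (n : ℕ) (s : Fin (n + 1) → Subgroup G)
    (hbot : s 0 = ⊥) (htop : s (Fin.last n) = ⊤)
    (hle : ∀ i : Fin n, s i.castSucc ≤ s i.succ)
    (hnorm : ∀ i : Fin n, ((s i.castSucc).subgroupOf (s i.succ)).Normal)
    (hfac : ∀ i : Fin n,
      letI := hnorm i
      K ((s i.succ : Type u) ⧸ (s i.castSucc).subgroupOf (s i.succ))) :
    K G := by
  have h := K_top K hK n G s hbot hle hnorm hfac
  rw [htop] at h
  exact hK.1 _ _ Subgroup.topEquiv h
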